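/- For every natural number n, the coefficient of α^n in the formal power series Q_y(α)^{n+1} ∈ (ℚ[y])[[α]] equals 1 + (−y) + (−y)^2 + ⋯ + (−y)^n = Σ_{i=0}^{n} (−y)^i in ℚ[y]. (This is Hirzebruch's computation of the χ_y-genus of complex projective n-space, χ_y(P^n) = ∫_{P^n} T_y^*(TP^n)∩[P^n], since the total Chern class of TP^n is (1+h)^{n+1}.) -/

import Mathlib

/-!
Context: `f` is the unique formal power series over `ℚ` with `f(x)·(1 − e^{−x}) = x`,
i.e. `f(x) = x/(1 − e^{−x})`.  The normalized Hirzebruch power series is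
`Q_y(α) := f(α(1+y)) − α·y ∈ (ℚ[y])[[α]]`.

STATEMENT 2: for every `n`, the coefficient of `α^n` in `Q_y(α)^{n+1}` equals
`1 + (−y) + ⋯ + (−y)^n` in `ℚ[y]` (Hirzebruch's computation of `χ_y(ℙⁿ)`).
-/

open PowerSeries

/-- `e^{-x} ∈ ℚ[[x]]`. -/
noncomputable def expNeg : PowerSeries ℚ := rescale (-1 : ℚ) (PowerSeries.exp ℚ)

/-- The normalized Hirzebruch power series `Q_y(α) = f(α(1+y)) − αy ∈ (ℚ[y])[[α]]`,
where `f(α(1+y))` is the substitution of `α(1+y)` into `f`, realized by rescaling by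
`1+y`. -/
noncomputable def Qy (f : PowerSeries ℚ) : PowerSeries (Polynomial ℚ) :=
  rescale (1 + Polynomial.X) (PowerSeries.map (algebraMap ℚ (Polynomial ℚ)) f) -
    PowerSeries.C Polynomial.X * PowerSeries.X

noncomputable def gser : PowerSeries ℚ := PowerSeries.mk fun n => (-1 : ℚ)^n / (Nat.factorial (n+1))

lemma coeff_expNeg (n : ℕ) : PowerSeries.coeff (R := ℚ) n expNeg = (-1)^n / (Nat.factorial n) := by
  simp [expNeg, coeff_rescale, PowerSeries.coeff_exp]
  ring

lemma X_mul_gser : (PowerSeries.X : PowerSeries ℚ) * gser = 1 - expNeg := by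
  ext n
  cases n with
  | zero =>
      have := coeff_expNeg 0
      simp at this
      simp [PowerSeries.coeff_zero_eq_constantCoeff] at this ⊢
      rw [this]; ring
  | succ m =>
      rw [PowerSeries.coeff_succ_X_mul]
      simp [gser, coeff_expNeg, PowerSeries.coeff_one, pow_succ]
      ring

noncomputable abbrev Rp := Polynomial ℚ

noncomputable def vser : PowerSeries Rp :=
  rescale (1 + Polynomial.X) (PowerSeries.map (algebraMap ℚ Rp) gser)

noncomputable def user : PowerSeries Rp := PowerSeries.X * vser

lemma coeff_vser (n : ℕ) :
    PowerSeries.coeff (R := Rp) n vser =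
      (1 + Polynomial.X)^n * (algebraMap ℚ Rp) ((-1 : ℚ)^n / (Nat.factorial (n+1))) := by
  simp [vser, coeff_rescale, gser]

lemma constantCoeff_vser : PowerSeries.constantCoeff (R := Rp) vser = 1 := by
  have := coeff_vser 0
  simp [PowerSeries.coeff_zero_eq_constantCoeff] at this
  simpa using this

lemma coeff_user (m : ℕ) :
    PowerSeries.coeff (R := Rp) (m+1) user =
      (1 + Polynomial.X)^m * (algebraMap ℚ Rp) ((-1:ℚ)^m / (Nat.factorial (m+1))) := by
  rw [user, PowerSeries.coeff_succ_X_mul, coeff_vser]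

lemma coeff_user_zero : PowerSeries.coeff (R := Rp) 0 user = 0 := by
  simp [user]

lemma deriv_user : d⁄dX Rp user = 1 - PowerSeries.C (R := Rp) (1 + Polynomial.X) * user := by
  apply PowerSeries.ext; intro n
  rw [PowerSeries.coeff_derivative]
  cases n with
  | zero =>
      have h0 : PowerSeries.constantCoeff (R := Rp) user = 0 := by simp [user]
      simp [coeff_user 0, h0, PowerSeries.coeff_one, PowerSeries.coeff_C_mul]
  | succ m =>
      rw [show m+1+1 = m+2 from rfl, coeff_user (m+1), map_sub, PowerSeries.coeff_one,
        PowerSeries.coeff_C_mul, coeff_user m]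
      have hcast : ((m:Rp) + 1 + 1) = algebraMap ℚ Rp ((m:ℚ)+2) := by
        rw [map_add, map_natCast, map_ofNat]; ring
      have h3 : ((-1:ℚ)^(m+1) / (Nat.factorial (m+2))) * ((m:ℚ)+2) = -((-1:ℚ)^m / (Nat.factorial (m+1))) := by
        rw [show m+2 = (m+1)+1 from rfl, Nat.factorial_succ]
        have hne : (Nat.factorial (m+1) : ℚ) ≠ 0 := by exact_mod_cast (Nat.factorial_pos (m+1)).ne'
        field_simp
        push_cast
        ring
      push_cast
      rw [hcast, mul_assoc, ← map_mul, h3]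
      simp [pow_succ]
      ring

lemma C_ne_zero : (PowerSeries.C (R := Rp) (1 + Polynomial.X)) ≠ 0 := by
  intro h
  have h2 := congrArg (PowerSeries.constantCoeff (R := Rp)) h
  simp at h2
  have := congrArg (fun p => Polynomial.coeff p 1) h2
  simp [Polynomial.coeff_one] at this

lemma F_mul_u (f : PowerSeries ℚ) (hf : f * (1 - expNeg) = PowerSeries.X) :
    rescale (1 + Polynomial.X) (PowerSeries.map (algebraMap ℚ Rp) f) * user = PowerSeries.X := by
  have h1 : f * (PowerSeries.X * gser) = PowerSeries.X := by rw [X_mul_gser]; exact hf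
  have h2 := congrArg (fun p => rescale (1 + Polynomial.X) (PowerSeries.map (algebraMap ℚ Rp) p)) h1
  simp only [map_mul, PowerSeries.map_X, rescale_X] at h2
  apply mul_left_cancel₀ C_ne_zero
  calc PowerSeries.C (R := Rp) (1 + Polynomial.X) *
        (rescale (1 + Polynomial.X) (PowerSeries.map (algebraMap ℚ Rp) f) * user)
      = rescale (1 + Polynomial.X) (PowerSeries.map (algebraMap ℚ Rp) f) *
          (PowerSeries.C (R := Rp) (1 + Polynomial.X) * PowerSeries.X *
            rescale (1 + Polynomial.X) (PowerSeries.map (algebraMap ℚ Rp) gser)) := by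
        rw [user, vser]; ring
    _ = PowerSeries.C (R := Rp) (1 + Polynomial.X) * PowerSeries.X := h2

lemma dmul (f g : PowerSeries Rp) :
    d⁄dX Rp (f * g) = f * d⁄dX Rp g + g * d⁄dX Rp f := by
  have h := PowerSeries.derivativeFun_mul f g
  simpa [smul_eq_mul] using h

lemma dpow (f : PowerSeries Rp) (m : ℕ) :
    d⁄dX Rp (f^(m+1)) = PowerSeries.C (R := Rp) ((m:Rp)+1) * (f^m * d⁄dX Rp f) := by
  induction m with
  | zero => simp
  | succ m ih =>
      rw [pow_succ, dmul, ih]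
      have hC : (PowerSeries.C (R := Rp)) ((m:Rp)+1+1) = (PowerSeries.C (R := Rp)) ((m:Rp)+1) + 1 := by
        rw [map_add, map_one]
      push_cast
      rw [hC]
      ring

lemma hdu_lemma : d⁄dX Rp user = X * (d⁄dX Rp vser) + vser := by
  rw [user, dmul]
  simp

lemma key_lemma (w : PowerSeries Rp) (hw : vser * w = 1) (n k : ℕ) (hk : k ≤ n) :
    PowerSeries.coeff (R := Rp) n (user^k * (d⁄dX Rp user) * w^(n+1)) =
      if k = n then 1 else 0 := by
  have hdu := hdu_lemma
  rcases eq_or_lt_of_le hk with heq | hlt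
  · subst heq
    have hexpr : user^k * (d⁄dX Rp user) * w^(k+1) =
        X^k * (1 + X * ((d⁄dX Rp vser) * vser^k * w^(k+1))) := by
      rw [hdu, user, mul_pow]
      have h1 : vser^(k+1) * w^(k+1) = 1 := by rw [← mul_pow, hw, one_pow]
      calc X^k * vser^k * (X * (d⁄dX Rp vser) + vser) * w^(k+1)
          = X^k * (vser^(k+1) * w^(k+1)) + X^k * (X * ((d⁄dX Rp vser) * vser^k * w^(k+1))) := by ring
        _ = X^k * (1 + X * ((d⁄dX Rp vser) * vser^k * w^(k+1))) := by rw [h1]; ring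
    rw [hexpr, if_pos rfl]
    have := PowerSeries.coeff_X_pow_mul (1 + X * ((d⁄dX Rp vser) * vser^k * w^(k+1))) k 0
    simpa using this
  · obtain ⟨m, hm⟩ : ∃ m, n = k + (m + 1) := ⟨n - k - 1, by omega⟩
    subst hm
    rw [if_neg (by omega)]
    have hdw : vser * (d⁄dX Rp w) = -(w * (d⁄dX Rp vser)) := by
      have h0 := congrArg (d⁄dX Rp) hw
      rw [dmul] at h0
      simp at h0
      linear_combination h0
    have hexpr : user^k * (d⁄dX Rp user) * w^(k+(m+1)+1) =
        X^k * (w^(m+1) + X * ((d⁄dX Rp vser) * w^(m+2))) := by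
      rw [hdu, user, mul_pow]
      have h1 : vser^(k+1) * w^(k+(m+1)+1) = w^(m+1) := by
        calc vser^(k+1) * w^(k+(m+1)+1) = (vser*w)^(k+1) * w^(m+1) := by ring
          _ = w^(m+1) := by rw [hw, one_pow, one_mul]
      have h2 : vser^k * w^(k+(m+1)+1) = w^(m+2) := by
        calc vser^k * w^(k+(m+1)+1) = (vser*w)^k * w^(m+2) := by ring
          _ = w^(m+2) := by rw [hw, one_pow, one_mul]
      calc X^k * vser^k * (X * (d⁄dX Rp vser) + vser) * w^(k+(m+1)+1)
          = X^k * (vser^(k+1) * w^(k+(m+1)+1)) +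
              X^k * (X * ((d⁄dX Rp vser) * (vser^k * w^(k+(m+1)+1)))) := by ring
        _ = X^k * (w^(m+1) + X * ((d⁄dX Rp vser) * w^(m+2))) := by rw [h1, h2]; ring
    rw [hexpr]
    have hco := PowerSeries.coeff_X_pow_mul
      (w^(m+1) + X * ((d⁄dX Rp vser) * w^(m+2))) k (m+1)
    rw [show m+1+k = k+(m+1) from by omega] at hco
    rw [hco, map_add, PowerSeries.coeff_succ_X_mul]
    -- now : coeff (m+1) (w^(m+1)) + coeff m ((d⁄dX vser) * w^(m+2)) = 0
    have hpow : d⁄dX Rp (w^(m+1)) =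
        -(PowerSeries.C (R := Rp) ((m:Rp)+1) * ((d⁄dX Rp vser) * w^(m+2))) := by
      rw [dpow]
      have h4 : (w^m : PowerSeries Rp) = vser * w^(m+1) := by
        calc (w^m : PowerSeries Rp) = (vser * w) * w^m := by rw [hw, one_mul]
          _ = vser * w^(m+1) := by ring
      have h3 : w^m * d⁄dX Rp w = -((d⁄dX Rp vser) * w^(m+2)) := by
        rw [h4]
        calc vser * w^(m+1) * (d⁄dX Rp w) = (vser * (d⁄dX Rp w)) * w^(m+1) := by ring
          _ = -(w * (d⁄dX Rp vser)) * w^(m+1) := by rw [hdw]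
          _ = -((d⁄dX Rp vser) * w^(m+2)) := by ring
      rw [h3]
      ring
    have h5 := congrArg (PowerSeries.coeff (R := Rp) m) hpow
    rw [PowerSeries.coeff_derivative] at h5
    simp only [map_neg, PowerSeries.coeff_C_mul] at h5
    have hQ : ((m:Rp)+1) ≠ 0 := by exact Nat.cast_add_one_ne_zero m
    have h6 : PowerSeries.coeff (R := Rp) (m+1) (w^(m+1)) =
        -(PowerSeries.coeff (R := Rp) m ((d⁄dX Rp vser) * w^(m+2))) := by
      apply mul_left_cancel₀ hQ
      push_cast at h5 ⊢
      linear_combination h5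
    rw [h6]; ring

lemma ej_lemma (w : PowerSeries Rp) (hw : vser * w = 1) (n j : ℕ) (hj : j ≤ n) :
    PowerSeries.coeff (R := Rp) n (user^j * (d⁄dX Rp user)^(n+1-j) * w^(n+1)) =
      (-(1+Polynomial.X))^(n-j) := by
  obtain ⟨M, rfl⟩ : ∃ M, n = j + M := ⟨n - j, by omega⟩
  rw [show j+M+1-j = M+1 from by omega, pow_succ]
  have hre : user^j * ((d⁄dX Rp user)^M * (d⁄dX Rp user)) * w^(j+M+1) =
      (d⁄dX Rp user)^M * (user^j * (d⁄dX Rp user) * w^(j+M+1)) := by ring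
  rw [hre]
  have hD : (d⁄dX Rp user)^M =
      ∑ i ∈ Finset.range (M+1),
        (-(PowerSeries.C (R := Rp) (1+Polynomial.X) * user))^i * 1^(M-i) * ↑(Nat.choose M i) := by
    rw [deriv_user]
    rw [show (1 : PowerSeries Rp) - PowerSeries.C (R := Rp) (1+Polynomial.X) * user =
      (-(PowerSeries.C (R := Rp) (1+Polynomial.X) * user)) + 1 from by ring]
    rw [add_pow]
  rw [hD, Finset.sum_mul, map_sum]
  have hstep : ∀ i ∈ Finset.range (M+1),
      PowerSeries.coeff (R := Rp) (j+M)
        ((-(PowerSeries.C (R := Rp) (1+Polynomial.X) * user))^i * 1^(M-i) * ↑(Nat.choose M i) *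
          (user^j * (d⁄dX Rp user) * w^(j+M+1))) =
      (-(1+Polynomial.X))^i * ((Nat.choose M i : Rp)) * (if i = M then (1:Rp) else 0) := by
    intro i hi
    have hi' : i ≤ M := by simpa [Nat.lt_succ_iff] using hi
    have h1 : (-(PowerSeries.C (R := Rp) (1+Polynomial.X) * user))^i * 1^(M-i) * ↑(Nat.choose M i) *
          (user^j * (d⁄dX Rp user) * w^(j+M+1)) =
        PowerSeries.C (R := Rp) ((-(1+Polynomial.X))^i * ((Nat.choose M i : Rp))) *
          (user^(j+i) * (d⁄dX Rp user) * w^(j+M+1)) := by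
      rw [show (-(PowerSeries.C (R := Rp) (1+Polynomial.X) * user)) =
        PowerSeries.C (R := Rp) (-(1+Polynomial.X)) * user from by rw [map_neg]; ring]
      rw [mul_pow, map_mul, map_pow, map_natCast, pow_add]
      push_cast
      ring
    rw [h1, PowerSeries.coeff_C_mul, key_lemma w hw (j+M) (j+i) (by omega)]
    rw [show (if j + i = j + M then (1:Rp) else 0) = (if i = M then (1:Rp) else 0) from by
      simp]
  rw [Finset.sum_congr rfl hstep]
  rw [Finset.sum_eq_single M]
  · simp [show j + M - j = M from by omega]
  · intro b _ hb
    simp [hb]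
  · intro h
    exact absurd (Finset.self_mem_range_succ M) h

lemma neg_one_add_X_ne_zero : (-(1+Polynomial.X) : Rp) ≠ 0 := by
  intro h
  have h2 : ((1+Polynomial.X) : Rp) = 0 := by linear_combination -h
  have := congrArg (fun p => Polynomial.coeff p 1) h2
  simp [Polynomial.coeff_one] at this

lemma sum_identity (n : ℕ) :
    (∑ j ∈ Finset.range (n+1), ((Nat.choose (n+1) j : Rp)) * (-(1+Polynomial.X))^(n-j)) =
      ∑ i ∈ Finset.range (n+1), (-Polynomial.X : Rp)^i := by
  apply mul_left_cancel₀ neg_one_add_X_ne_zero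
  have hbin := add_pow (1:Rp) (-(1+Polynomial.X)) (n+1)
  rw [Finset.sum_range_succ] at hbin
  have h1 : ((1:Rp) + -(1+Polynomial.X))^(n+1) = (-Polynomial.X)^(n+1) := by ring_nf
  rw [h1] at hbin
  simp only [one_pow, one_mul, Nat.choose_self, Nat.cast_one, mul_one, Nat.sub_self, pow_zero]
  at hbin
  -- hbin : (-X)^(n+1) = Σ_{j∈range(n+1)} (-(1+X))^(n+1-j) * ch(n+1,j)  + 1
  have hL : (-(1+Polynomial.X) : Rp) *
      (∑ j ∈ Finset.range (n+1), ((Nat.choose (n+1) j : Rp)) * (-(1+Polynomial.X))^(n-j)) =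
      ∑ j ∈ Finset.range (n+1), (-(1+Polynomial.X) : Rp)^(n+1-j) * (Nat.choose (n+1) j : Rp) := by
    rw [Finset.mul_sum]
    apply Finset.sum_congr rfl
    intro j hj
    have hj' : j ≤ n := by simpa [Nat.lt_succ_iff] using hj
    rw [show n+1-j = (n-j)+1 from by omega, pow_succ]
    ring
  have hR := geom_sum_mul (-Polynomial.X : Rp) (n+1)
  -- hR : (Σ (-X)^i) * ((-X) - 1) = (-X)^(n+1) - 1
  rw [hL]
  have hfin : (-Polynomial.X - 1 : Rp) = -(1+Polynomial.X) := by ring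
  rw [hfin] at hR
  linear_combination -hbin - hR

theorem stmt_2 (f : PowerSeries ℚ) (hf : f * (1 - expNeg) = PowerSeries.X) (n : ℕ) :
    PowerSeries.coeff (R := Polynomial ℚ) n (Qy f ^ (n + 1)) =
      ∑ i ∈ Finset.range (n + 1), (-Polynomial.X : Polynomial ℚ) ^ i := by
  classical
  have hUnit : IsUnit vser := by
    rw [PowerSeries.isUnit_iff_constantCoeff, constantCoeff_vser]
    exact isUnit_one
  obtain ⟨U, hU⟩ := hUnit
  set w : PowerSeries Rp := ↑U⁻¹ with hwdef
  have hvw : vser * w = 1 := by rw [← hU, hwdef]; exact U.mul_inv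
  have hF := F_mul_u f hf
  have hQu : Qy f * user = X * (1 - PowerSeries.C (R := Rp) Polynomial.X * user) := by
    rw [Qy, sub_mul, hF, user]
    ring
  have hXn : X^(n+1) * ((Qy f)^(n+1) * vser^(n+1)) =
      X^(n+1) * ((1 - PowerSeries.C (R := Rp) Polynomial.X * user)^(n+1)) := by
    calc X^(n+1) * ((Qy f)^(n+1) * vser^(n+1)) = (Qy f * user)^(n+1) := by
          rw [mul_pow, user, mul_pow]; ring
      _ = X^(n+1) * ((1 - PowerSeries.C (R := Rp) Polynomial.X * user)^(n+1)) := by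
          rw [hQu, mul_pow]
  have hcancel : (Qy f)^(n+1) * vser^(n+1) =
      (1 - PowerSeries.C (R := Rp) Polynomial.X * user)^(n+1) :=
    mul_left_cancel₀ (pow_ne_zero _ PowerSeries.X_ne_zero) hXn
  have hQw : (Qy f)^(n+1) = (1 - PowerSeries.C (R := Rp) Polynomial.X * user)^(n+1) * w^(n+1) := by
    calc (Qy f)^(n+1) = ((Qy f)^(n+1) * vser^(n+1)) * w^(n+1) := by
          rw [show (Qy f)^(n+1) * vser^(n+1) * w^(n+1) = (Qy f)^(n+1) * (vser*w)^(n+1) from by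
            rw [mul_pow]; ring, hvw]; simp
      _ = (1 - PowerSeries.C (R := Rp) Polynomial.X * user)^(n+1) * w^(n+1) := by rw [hcancel]
  have hsplit : (1 : PowerSeries Rp) - PowerSeries.C (R := Rp) Polynomial.X * user =
      user + d⁄dX Rp user := by
    rw [deriv_user, map_add, map_one]
    ring
  rw [hQw, hsplit, add_pow, Finset.sum_mul, map_sum, Finset.sum_range_succ]
  have hlast : PowerSeries.coeff (R := Rp) n
      (user^(n+1) * (d⁄dX Rp user)^(n+1-(n+1)) * ↑(Nat.choose (n+1) (n+1)) * w^(n+1)) = 0 := by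
    rw [Nat.sub_self, pow_zero, Nat.choose_self]
    have hform : user^(n+1) * 1 * ((1:ℕ) : PowerSeries Rp) * w^(n+1) = X^(n+1) := by
      rw [user, mul_pow]
      calc X^(n+1) * vser^(n+1) * 1 * ((1:ℕ) : PowerSeries Rp) * w^(n+1)
          = X^(n+1) * (vser * w)^(n+1) := by rw [mul_pow]; push_cast; ring
        _ = X^(n+1) := by rw [hvw]; simp
    rw [hform, PowerSeries.coeff_X_pow]
    simp
  rw [hlast, add_zero]
  have hmid : ∀ j ∈ Finset.range (n+1),
      PowerSeries.coeff (R := Rp) n (user^j * (d⁄dX Rp user)^(n+1-j) * ↑(Nat.choose (n+1) j) * w^(n+1)) =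
      ((Nat.choose (n+1) j : Rp)) * (-(1+Polynomial.X))^(n-j) := by
    intro j hj
    have hj' : j ≤ n := by simpa [Nat.lt_succ_iff] using hj
    have hform : user^j * (d⁄dX Rp user)^(n+1-j) * ↑(Nat.choose (n+1) j) * w^(n+1) =
        PowerSeries.C (R := Rp) ((Nat.choose (n+1) j : Rp)) *
          (user^j * (d⁄dX Rp user)^(n+1-j) * w^(n+1)) := by
      rw [map_natCast]
      push_cast
      ring
    rw [hform, PowerSeries.coeff_C_mul, ej_lemma w hvw n j hj']
  rw [Finset.sum_congr rfl hmid, sum_identity]
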